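/- arXiv:1812.00368 — 2 statements merged into one kernel-verified Lean document; each statement's English description precedes it below -/
import Mathlib

section
/- Let W be a skew-weighing matrix W(n,m), let α ∈ F_q, and let G = [W + α·I_n | I_n] over F_q. If m + α² + 1 ≠ 0 in F_q, then G generates an LCD code C of length 2n and dimension n over F_q. Moreover, if in addition m + α² ≠ 0 in F_q and β ∈ F_q satisfies β + α² + m = 0, then Ḡ = [W + α·I_n | β·I_n] generates the dual code C⊥. -/
open Matrix BigOperators

/-- The row span of a matrix `G`: the linear code generated by the rows of `G`. -/
def rowSpan (F : Type*) [Field F] {k ι : Type*} (G : Matrix k ι F) : Submodule F (ι → F) :=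
  Submodule.span F (Set.range fun i => G i)

/-- The dual of a linear code under the standard dot product. -/
def dualCode {F : Type*} [Field F] {ι : Type*} [Fintype ι] (C : Submodule F (ι → F)) :
    Submodule F (ι → F) where
  carrier := {v | ∀ c ∈ C, v ⬝ᵥ c = 0}
  add_mem' := by
    intro a b ha hb c hc
    rw [add_dotProduct, ha c hc, hb c hc, add_zero]
  zero_mem' := by
    intro c hc
    rw [zero_dotProduct]
  smul_mem' := by
    intro r a ha c hc
    rw [smul_dotProduct, ha c hc, smul_zero]

/-- A linear code is LCD (linear complementary dual) if it meets its dual trivially. -/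
def IsLCD {F : Type*} [Field F] {ι : Type*} [Fintype ι] (C : Submodule F (ι → F)) : Prop :=
  C ⊓ dualCode C = ⊥

section Aux

variable {F : Type*} [Field F] {k ι : Type*} [Fintype k] [Fintype ι]

omit [Fintype k] in
lemma mem_dualCode_rowSpan (M : Matrix k ι F) (v : ι → F) :
    v ∈ dualCode (rowSpan F M) ↔ ∀ i, v ⬝ᵥ M i = 0 := by
  constructor
  · intro h i; exact h (M i) (Submodule.subset_span (Set.mem_range_self i))
  · intro h c hc
    induction hc using Submodule.span_induction with
    | mem x hx => obtain ⟨i, rfl⟩ := hx; exact h i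
    | zero => simp
    | add x y _ _ hx hy => rw [dotProduct_add, hx, hy, add_zero]
    | smul r x _ hx => rw [dotProduct_smul, hx, smul_zero]

omit [Fintype k] in
lemma dualCode_rowSpan_eq_ker (M : Matrix k ι F) :
    dualCode (rowSpan F M) = LinearMap.ker M.mulVecLin := by
  ext v
  rw [mem_dualCode_rowSpan, LinearMap.mem_ker]
  constructor
  · intro h; ext i
    simpa [Matrix.mulVec, dotProduct_comm] using h i
  · intro h i
    have := congrFun h i
    simpa [Matrix.mulVec, dotProduct_comm] using this

omit [Fintype ι] in
lemma sum_smul_rows_eq_vecMul (M : Matrix k ι F) (g : k → F) :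
    ∑ i, g i • M i = g ᵥ* M := by
  ext j
  simp [Matrix.vecMul, dotProduct, Finset.sum_apply]

lemma vecMul_smul_one {n : ℕ} (c : F) (g : Fin n → F) :
    g ᵥ* (c • (1 : Matrix (Fin n) (Fin n) F)) = c • g := by
  ext i
  simp [Matrix.vecMul, dotProduct, Matrix.smul_apply, Matrix.one_apply, mul_ite,
    Finset.sum_ite_eq, mul_comm]

lemma rows_li {n : ℕ} (M : Matrix (Fin n) ι F) (c : F) (hc : c ≠ 0)
    (h : M * Mᵀ = c • (1 : Matrix (Fin n) (Fin n) F)) :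
    LinearIndependent F (fun i => M i) := by
  rw [Fintype.linearIndependent_iff]
  intro g hg
  rw [sum_smul_rows_eq_vecMul] at hg
  have h2 : g ᵥ* (M * Mᵀ) = 0 := by
    rw [← Matrix.vecMul_vecMul, hg, Matrix.zero_vecMul]
  rw [h, vecMul_smul_one] at h2
  have hg0 : g = 0 := by
    funext i
    have := congrFun h2 i
    simp only [Pi.smul_apply, smul_eq_mul, Pi.zero_apply, mul_eq_zero] at this
    exact this.resolve_left hc
  intro i; rw [hg0]; rfl

end Aux

section Alg

variable {F : Type*} [Field F] {n m : ℕ}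

lemma WW_eq (W : Matrix (Fin n) (Fin n) ℤ)
    (hW : W * Wᵀ = (m : ℤ) • (1 : Matrix (Fin n) (Fin n) ℤ))
    (hskew : Wᵀ = -W) :
    (W.map (Int.cast : ℤ → F)) * (W.map (Int.cast : ℤ → F)) =
      (-(m : F)) • (1 : Matrix (Fin n) (Fin n) F) := by
  have h2 : W * W = -((m : ℤ) • (1 : Matrix (Fin n) (Fin n) ℤ)) := by
    rw [hskew, Matrix.mul_neg] at hW
    rw [← neg_eq_iff_eq_neg, ← hW]
  ext i j
  have h2' := congrFun (congrFun h2 i) j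
  simp only [Matrix.mul_apply, Matrix.neg_apply, Matrix.smul_apply, Matrix.one_apply,
    smul_eq_mul, Matrix.map_apply] at h2' ⊢
  have hc : (∑ k, (W i k : F) * (W k j : F)) = ((∑ k, W i k * W k j : ℤ) : F) := by
    push_cast; ring
  rw [hc, h2']
  push_cast
  split_ifs <;> simp

lemma AAT_eq (W : Matrix (Fin n) (Fin n) ℤ)
    (hW : W * Wᵀ = (m : ℤ) • (1 : Matrix (Fin n) (Fin n) ℤ))
    (hskew : Wᵀ = -W) (α : F) :
    (W.map (Int.cast : ℤ → F) + α • 1) * (W.map (Int.cast : ℤ → F) + α • 1)ᵀ =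
      ((m : F) + α ^ 2) • (1 : Matrix (Fin n) (Fin n) F) := by
  set Wm := W.map (Int.cast : ℤ → F) with hWm
  have hT : (Wm + α • 1)ᵀ = -Wm + α • 1 := by
    rw [Matrix.transpose_add, Matrix.transpose_smul, Matrix.transpose_one]
    congr 1
    rw [hWm, ← Matrix.transpose_map, hskew]
    ext i j; simp [Matrix.map_apply]
  have hWW := WW_eq (F := F) W hW hskew
  rw [← hWm] at hWW
  rw [hT, Matrix.add_mul, Matrix.mul_add, Matrix.mul_add, Matrix.mul_neg, Matrix.mul_neg,
    Matrix.smul_mul, Matrix.smul_mul, Matrix.mul_smul, Matrix.mul_smul, Matrix.one_mul,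
    Matrix.mul_one, hWW]
  ext i j
  simp [Matrix.add_apply, Matrix.neg_apply, Matrix.smul_apply, Matrix.one_apply]
  split_ifs <;> ring

end Alg

/-- If `W` is a skew-weighing matrix `W(n,m)`, `α ∈ F` and
`G = [W + α·I_n | I_n]` over the finite field `F` with `m + α² + 1 ≠ 0` in `F`, then `G`
generates an LCD code `C` of length `2n` and dimension `n`; moreover if in addition
`m + α² ≠ 0` and `β + α² + m = 0` in `F`, then `Ḡ = [W + α·I_n | β·I_n]` generates `C⊥`. -/
theorem statement8 {F : Type*} [Field F] [Fintype F] {n m : ℕ}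
    (W : Matrix (Fin n) (Fin n) ℤ)
    (hWent : ∀ i j, W i j = 0 ∨ W i j = 1 ∨ W i j = -1)
    (hW : W * Wᵀ = (m : ℤ) • (1 : Matrix (Fin n) (Fin n) ℤ))
    (hskew : Wᵀ = -W)
    (α β : F)
    (h1 : (m : F) + α ^ 2 + 1 ≠ 0)
    (G Gbar : Matrix (Fin n) (Fin n ⊕ Fin n) F)
    (hG : G = Matrix.fromCols
      (W.map (Int.cast : ℤ → F) + α • (1 : Matrix (Fin n) (Fin n) F))
      (1 : Matrix (Fin n) (Fin n) F))
    (hGbar : Gbar = Matrix.fromCols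
      (W.map (Int.cast : ℤ → F) + α • (1 : Matrix (Fin n) (Fin n) F))
      (β • (1 : Matrix (Fin n) (Fin n) F))) :
    (IsLCD (rowSpan F G) ∧ Module.finrank F (rowSpan F G) = n) ∧
    ((m : F) + α ^ 2 ≠ 0 → β + α ^ 2 + (m : F) = 0 →
      rowSpan F Gbar = dualCode (rowSpan F G)) := by
  have hAAT := AAT_eq (F := F) W hW hskew α
  have hGGT : G * Gᵀ = ((m : F) + α ^ 2 + 1) • (1 : Matrix (Fin n) (Fin n) F) := by
    rw [hG, Matrix.transpose_fromCols, Matrix.fromCols_mul_fromRows, hAAT,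
      Matrix.transpose_one, Matrix.one_mul]
    ext i j
    simp [Matrix.add_apply, Matrix.smul_apply, Matrix.one_apply]
    split_ifs <;> ring
  have hli : LinearIndependent F (fun i => G i) := rows_li G _ h1 hGGT
  have hrank : Module.finrank F (rowSpan F G) = n := by
    rw [rowSpan, finrank_span_eq_card hli, Fintype.card_fin]
  refine ⟨⟨?_, hrank⟩, ?_⟩
  · -- LCD
    rw [IsLCD, eq_bot_iff]
    intro x hx
    rw [Submodule.mem_inf] at hx
    obtain ⟨hx1, hx2⟩ := hx
    rw [Submodule.mem_bot]
    obtain ⟨g, hgx⟩ := (Submodule.mem_span_range_iff_exists_fun F).mp hx1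
    rw [sum_smul_rows_eq_vecMul] at hgx
    rw [mem_dualCode_rowSpan] at hx2
    have hz : x ᵥ* Gᵀ = 0 := by
      ext i
      simpa [Matrix.vecMul, dotProduct, Matrix.transpose_apply] using hx2 i
    rw [← hgx, Matrix.vecMul_vecMul, hGGT, vecMul_smul_one] at hz
    have hg0 : g = 0 := by
      funext i
      have := congrFun hz i
      simp only [Pi.smul_apply, smul_eq_mul, Pi.zero_apply, mul_eq_zero] at this
      exact this.resolve_left h1
    rw [← hgx, hg0, Matrix.zero_vecMul]
  · intro h2 h3
    have hβ : β = -((m : F) + α ^ 2) := by linear_combination h3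
    have hGbGbT : Gbar * Gbarᵀ =
        (((m : F) + α ^ 2) * ((m : F) + α ^ 2 + 1)) • (1 : Matrix (Fin n) (Fin n) F) := by
      rw [hGbar, Matrix.transpose_fromCols, Matrix.fromCols_mul_fromRows, hAAT,
        Matrix.transpose_smul, Matrix.transpose_one, Matrix.smul_mul, Matrix.mul_smul,
        Matrix.one_mul, hβ]
      ext i j
      simp [Matrix.add_apply, Matrix.smul_apply, Matrix.one_apply]
      split_ifs <;> ring
    have hcne : ((m : F) + α ^ 2) * ((m : F) + α ^ 2 + 1) ≠ 0 := mul_ne_zero h2 h1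
    have hliB : LinearIndependent F (fun i => Gbar i) := rows_li Gbar _ hcne hGbGbT
    have hrankB : Module.finrank F (rowSpan F Gbar) = n := by
      rw [rowSpan, finrank_span_eq_card hliB, Fintype.card_fin]
    have hGbGT : Gbar * Gᵀ = 0 := by
      rw [hGbar, hG, Matrix.transpose_fromCols, Matrix.fromCols_mul_fromRows, hAAT,
        Matrix.transpose_one, Matrix.smul_mul, Matrix.one_mul, hβ]
      ext i j
      simp [Matrix.add_apply, Matrix.smul_apply, Matrix.one_apply]
      split_ifs <;> ring
    have hle : rowSpan F Gbar ≤ dualCode (rowSpan F G) := by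
      rw [rowSpan, Submodule.span_le]
      rintro _ ⟨i, rfl⟩
      rw [SetLike.mem_coe, mem_dualCode_rowSpan]
      intro j
      have := congrFun (congrFun hGbGT i) j
      simpa [Matrix.mul_apply, dotProduct, Matrix.transpose_apply] using this
    have hdual : Module.finrank F (dualCode (rowSpan F G)) = n := by
      rw [dualCode_rowSpan_eq_ker]
      have hrn := LinearMap.finrank_range_add_finrank_ker G.mulVecLin
      have hrange : Module.finrank F (LinearMap.range G.mulVecLin) = n := by
        have h4 : G.rank = n := by
          rw [Matrix.rank_eq_finrank_span_row]
          exact hrank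
        exact h4
      rw [hrange] at hrn
      have hdim : Module.finrank F ((Fin n ⊕ Fin n) → F) = n + n := by
        simp [Module.finrank_pi]
      rw [hdim] at hrn
      omega
    exact Submodule.eq_of_le_of_finrank_eq hle (by rw [hrankB, hdual])
end

section
/- Let W be a weighing matrix W(n,m) and let G be a group of permutation automorphisms of W acting with t row orbits and t column orbits, all of the same length, and let R be the t×t row orbit matrix of W with respect to G. If m + 1 ≠ 0 in F_q, then A = [R|I_t] (over F_q) generates an LCD code C of length 2t and dimension t over F_q. Moreover, if in addition m ≠ 0 in F_q and α ∈ F_q satisfies α + m = 0, then Ā = [R|α·I_t] generates the dual code C⊥, and C is formally self-dual: for every w, the number of codewords of Hamming weight w in C equals the number of codewords of Hamming weight w in C⊥. -/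
open Matrix BigOperators

/-- `(σ, τ)` is a permutation automorphism of the square matrix `M` if permuting the rows
by `σ` and the columns by `τ` leaves `M` unchanged, i.e. `M (σ i) (τ j) = M i j`. -/
def IsPermAut {n : ℕ} {R : Type*} (M : Matrix (Fin n) (Fin n) R)
    (g : Equiv.Perm (Fin n) × Equiv.Perm (Fin n)) : Prop :=
  ∀ i j, M (g.1 i) (g.2 j) = M i j

section Statement19Aux

/-- The row orbit matrix of a weighing matrix, taken with respect to a group of permutation
automorphisms whose row and column orbits all have the same length, satisfies
`Γ * Γᵀ = m • 1` over `ℤ`. -/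
theorem orbitMatrix_mul_transpose {n m t l : ℕ}
    (W : Matrix (Fin n) (Fin n) ℤ)
    (hW : W * Wᵀ = (m : ℤ) • (1 : Matrix (Fin n) (Fin n) ℤ))
    (G : Subgroup (Equiv.Perm (Fin n) × Equiv.Perm (Fin n)))
    (hG : ∀ g ∈ G, IsPermAut W g)
    (R : Fin t → Finset (Fin n))
    (hRorb : ∀ i, ∀ x ∈ R i, ∀ u, u ∈ R i ↔ ∃ g ∈ G, g.1 x = u)
    (hRpart : ∀ x : Fin n, ∃! i, x ∈ R i)
    (C : Fin t → Finset (Fin n))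
    (hCorb : ∀ j, ∀ y ∈ C j, ∀ z, z ∈ C j ↔ ∃ g ∈ G, g.2 y = z)
    (hCpart : ∀ y : Fin n, ∃! j, y ∈ C j)
    (hRlen : ∀ i, (R i).card = l) (hClen : ∀ j, (C j).card = l)
    (ρ : Fin t → Fin n) (hρ : ∀ i, ρ i ∈ R i) :
    (Matrix.of fun i j => ∑ z ∈ C j, W (ρ i) z) *
      (Matrix.of fun i j => ∑ z ∈ C j, W (ρ i) z)ᵀ
      = (m : ℤ) • (1 : Matrix (Fin t) (Fin t) ℤ) := by
  have hCmem : ∀ (j : Fin t) (g : Equiv.Perm (Fin n) × Equiv.Perm (Fin n)), g ∈ G →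
      ∀ z ∈ C j, g.2 z ∈ C j := fun j g hg z hz => (hCorb j z hz (g.2 z)).mpr ⟨g, hg, rfl⟩
  have hRmem : ∀ (i : Fin t) (g : Equiv.Perm (Fin n) × Equiv.Perm (Fin n)), g ∈ G →
      ∀ x ∈ R i, g.1 x ∈ R i := fun i g hg x hx => (hRorb i x hx (g.1 x)).mpr ⟨g, hg, rfl⟩
  have rowInv : ∀ (j : Fin t) (g : Equiv.Perm (Fin n) × Equiv.Perm (Fin n)), g ∈ G →
      ∀ x : Fin n, ∑ z ∈ C j, W (g.1 x) z = ∑ z ∈ C j, W x z := by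
    intro j g hg x
    refine Finset.sum_nbij' (fun z => (g⁻¹).2 z) (fun z => g.2 z) ?_ ?_ ?_ ?_ ?_
    · intro z hz; exact hCmem j g⁻¹ (inv_mem hg) z hz
    · intro z hz; exact hCmem j g hg z hz
    · intro z _; simp
    · intro z _; simp
    · intro z _
      have := hG g⁻¹ (inv_mem hg) (g.1 x) z
      simpa using this.symm
  have rowConst : ∀ (i j : Fin t), ∀ x ∈ R i,
      ∑ z ∈ C j, W x z = ∑ z ∈ C j, W (ρ i) z := by
    intro i j x hx
    obtain ⟨g, hg, hgx⟩ := (hRorb i (ρ i) (hρ i) x).mp hx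
    rw [← hgx]; exact rowInv j g hg (ρ i)
  have colInv : ∀ (k : Fin t) (g : Equiv.Perm (Fin n) × Equiv.Perm (Fin n)), g ∈ G →
      ∀ z : Fin n, ∑ x ∈ R k, W x (g.2 z) = ∑ x ∈ R k, W x z := by
    intro k g hg z
    refine Finset.sum_nbij' (fun x => (g⁻¹).1 x) (fun x => g.1 x) ?_ ?_ ?_ ?_ ?_
    · intro x hx; exact hRmem k g⁻¹ (inv_mem hg) x hx
    · intro x hx; exact hRmem k g hg x hx
    · intro x _; simp
    · intro x _; simp
    · intro x _
      have := hG g⁻¹ (inv_mem hg) x (g.2 z)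
      simpa using this.symm
  have colConst : ∀ (k j : Fin t), ∀ z ∈ C j, ∀ z' ∈ C j,
      ∑ x ∈ R k, W x z' = ∑ x ∈ R k, W x z := by
    intro k j z hz z' hz'
    obtain ⟨g, hg, hgz⟩ := (hCorb j z hz z').mp hz'
    rw [← hgz]; exact colInv k g hg z
  have GammaEq : ∀ (k j : Fin t), ∀ z ∈ C j,
      ∑ z' ∈ C j, W (ρ k) z' = ∑ x ∈ R k, W x z := by
    intro k j z hz
    have hl : ((l : ℤ)) ≠ 0 := by
      have : 0 < (R k).card := Finset.card_pos.mpr ⟨ρ k, hρ k⟩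
      rw [hRlen k] at this
      exact Int.natCast_ne_zero.mpr this.ne'
    have h1 : ∑ x ∈ R k, ∑ z' ∈ C j, W x z' = (l : ℤ) * ∑ z' ∈ C j, W (ρ k) z' := by
      rw [Finset.sum_congr rfl (fun x hx => rowConst k j x hx), Finset.sum_const, hRlen,
        nsmul_eq_mul]
    have h2 : ∑ z' ∈ C j, ∑ x ∈ R k, W x z' = (l : ℤ) * ∑ x ∈ R k, W x z := by
      rw [Finset.sum_congr rfl (fun z' hz' => colConst k j z hz z' hz'), Finset.sum_const, hClen,
        nsmul_eq_mul]
    have h3 : ∑ x ∈ R k, ∑ z' ∈ C j, W x z' = ∑ z' ∈ C j, ∑ x ∈ R k, W x z' :=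
      Finset.sum_comm
    exact mul_left_cancel₀ hl (by rw [← h1, h3, h2])
  have partition : ∀ f : Fin n → ℤ, ∑ j : Fin t, ∑ z ∈ C j, f z = ∑ z : Fin n, f z := by
    intro f
    have huniv : (Finset.univ : Finset (Fin t)).biUnion C = Finset.univ := by
      ext z
      simp only [Finset.mem_biUnion, Finset.mem_univ, true_and, iff_true]
      obtain ⟨j, hj, _⟩ := hCpart z
      exact ⟨j, hj⟩
    have hdisj : ((Finset.univ : Finset (Fin t)) : Set (Fin t)).PairwiseDisjoint C := by
      intro i _ j _ hij
      simp only [Function.onFun]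
      rw [Finset.disjoint_left]
      intro z hzi hzj
      obtain ⟨j', _, huniq⟩ := hCpart z
      exact hij ((huniq i hzi).trans (huniq j hzj).symm)
    rw [← huniv, Finset.sum_biUnion hdisj]
  ext i k
  have step1 : ∀ j : Fin t,
      (∑ z ∈ C j, W (ρ i) z) * (∑ z' ∈ C j, W (ρ k) z')
        = ∑ z ∈ C j, W (ρ i) z * ∑ x ∈ R k, W x z := by
    intro j
    rw [Finset.sum_mul]
    exact Finset.sum_congr rfl fun z hz => by rw [GammaEq k j z hz]
  have hiff : ρ i ∈ R k ↔ i = k := by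
    constructor
    · intro h
      obtain ⟨j', _, huniq⟩ := hRpart (ρ i)
      exact ((huniq i (hρ i)).trans (huniq k h).symm)
    · rintro rfl; exact hρ i
  calc ((Matrix.of fun i j => ∑ z ∈ C j, W (ρ i) z) *
      (Matrix.of fun i j => ∑ z ∈ C j, W (ρ i) z)ᵀ) i k
      = ∑ j : Fin t, (∑ z ∈ C j, W (ρ i) z) * (∑ z' ∈ C j, W (ρ k) z') := by
        simp [Matrix.mul_apply]
    _ = ∑ j : Fin t, ∑ z ∈ C j, W (ρ i) z * ∑ x ∈ R k, W x z :=
        Finset.sum_congr rfl fun j _ => step1 j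
    _ = ∑ z : Fin n, W (ρ i) z * ∑ x ∈ R k, W x z := partition _
    _ = ∑ x ∈ R k, ∑ z : Fin n, W (ρ i) z * W x z := by
        rw [Finset.sum_comm]
        exact Finset.sum_congr rfl fun z _ => Finset.mul_sum _ _ _
    _ = ∑ x ∈ R k, (W * Wᵀ) (ρ i) x :=
        Finset.sum_congr rfl fun x _ => by simp [Matrix.mul_apply]
    _ = ∑ x ∈ R k, if ρ i = x then (m : ℤ) else 0 := by
        rw [hW]
        exact Finset.sum_congr rfl fun x _ => by
          simp [Matrix.smul_apply, Matrix.one_apply]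
    _ = if ρ i ∈ R k then (m : ℤ) else 0 := Finset.sum_ite_eq (R k) (ρ i) fun _ => (m : ℤ)
    _ = ((m : ℤ) • (1 : Matrix (Fin t) (Fin t) ℤ)) i k := by
        rcases eq_or_ne i k with rfl | h
        · rw [if_pos (hρ i)]; simp
        · rw [if_neg (fun hmem => h (hiff.mp hmem))]
          simp [Matrix.one_apply, h]

lemma mem_dualCode {F : Type*} [Field F] {ι : Type*} [Fintype ι] (C : Submodule F (ι → F))
    (v : ι → F) : v ∈ dualCode C ↔ ∀ c ∈ C, v ⬝ᵥ c = 0 := Iff.rfl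

lemma rowSpan_eq_range {F : Type*} [Field F] {k ι : Type*} [Fintype k] (G : Matrix k ι F) :
    rowSpan F G = LinearMap.range G.vecMulLinear := by
  rw [_root_.range_vecMulLinear]; rfl

lemma mem_rowSpan_iff {F : Type*} [Field F] {k ι : Type*} [Fintype k] (G : Matrix k ι F)
    (v : ι → F) : v ∈ rowSpan F G ↔ ∃ u, u ᵥ* G = v := by
  rw [rowSpan_eq_range]
  exact ⟨fun ⟨u, hu⟩ => ⟨u, hu⟩, fun ⟨u, hu⟩ => ⟨u, hu⟩⟩

lemma dualCode_rowSpan {F : Type*} [Field F] {k ι : Type*} [Fintype k] [Fintype ι]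
    (G : Matrix k ι F) : dualCode (rowSpan F G) = LinearMap.ker G.mulVecLin := by
  ext v
  rw [mem_dualCode, LinearMap.mem_ker]
  constructor
  · intro hv
    ext i
    have := hv (G i) (Submodule.subset_span ⟨i, rfl⟩)
    simpa [Matrix.mulVecLin_apply, Matrix.mulVec, dotProduct_comm] using this
  · intro hv c hc
    induction hc using Submodule.span_induction with
    | mem c hcmem =>
      obtain ⟨i, rfl⟩ := hcmem
      have := congrFun hv i
      simpa [Matrix.mulVecLin_apply, Matrix.mulVec, dotProduct_comm] using this
    | zero => simp
    | add x y _ _ hx hy => rw [dotProduct_add, hx, hy, add_zero]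
    | smul r x _ hx => rw [dotProduct_smul, hx, smul_zero]

lemma finrank_rowSpan {F : Type*} [Field F] {k ι : Type*} [Fintype k] [Fintype ι]
    (G : Matrix k ι F) (hinj : Function.Injective G.vecMulLinear) :
    Module.finrank F (rowSpan F G) = Fintype.card k := by
  rw [rowSpan_eq_range, LinearMap.finrank_range_of_inj hinj]
  simp [Module.finrank_pi]

end Statement19Aux

/-- Let `W` be a weighing matrix `W(n,m)`, let `G` be a group of
permutation automorphisms of `W` acting with `t` row orbits and `t` column orbits, all of
the same length `l`, and let `R` be the `t × t` row orbit matrix of `W`.  If `m + 1 ≠ 0`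
in `F`, then `A = [R | I_t]` generates an LCD code `C` of length `2t` and dimension `t`
over `F`.  Moreover, if in addition `m ≠ 0` in `F` and `α + m = 0`, then
`Ā = [R | α·I_t]` generates the dual code `C⊥`, and `C` is formally self-dual: for every
`w`, the number of codewords of weight `w` in `C` equals that in `C⊥`. -/
theorem statement19 {F : Type*} [Field F] [Fintype F] [DecidableEq F] {n m t l : ℕ}
    (W : Matrix (Fin n) (Fin n) ℤ)
    (hWent : ∀ i j, W i j = 0 ∨ W i j = 1 ∨ W i j = -1)
    (hW : W * Wᵀ = (m : ℤ) • (1 : Matrix (Fin n) (Fin n) ℤ))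
    (G : Subgroup (Equiv.Perm (Fin n) × Equiv.Perm (Fin n)))
    (hG : ∀ g ∈ G, IsPermAut W g)
    (R : Fin t → Finset (Fin n))
    (hRorb : ∀ i, ∀ x ∈ R i, ∀ u, u ∈ R i ↔ ∃ g ∈ G, g.1 x = u)
    (hRpart : ∀ x : Fin n, ∃! i, x ∈ R i)
    (C : Fin t → Finset (Fin n))
    (hCorb : ∀ j, ∀ y ∈ C j, ∀ z, z ∈ C j ↔ ∃ g ∈ G, g.2 y = z)
    (hCpart : ∀ y : Fin n, ∃! j, y ∈ C j)
    (hRlen : ∀ i, (R i).card = l) (hClen : ∀ j, (C j).card = l)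
    (ρ : Fin t → Fin n) (hρ : ∀ i, ρ i ∈ R i)
    (hm1 : (m : F) + 1 ≠ 0)
    (A : Matrix (Fin t) (Fin t ⊕ Fin t) F)
    (hA : A = Matrix.fromCols
      ((Matrix.of fun i j => ∑ z ∈ C j, W (ρ i) z).map (Int.cast : ℤ → F))
      (1 : Matrix (Fin t) (Fin t) F)) :
    (IsLCD (rowSpan F A) ∧ Module.finrank F (rowSpan F A) = t) ∧
    ((m : F) ≠ 0 → ∀ α : F, α + (m : F) = 0 →
      (rowSpan F (Matrix.fromCols
        ((Matrix.of fun i j => ∑ z ∈ C j, W (ρ i) z).map (Int.cast : ℤ → F))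
        (α • (1 : Matrix (Fin t) (Fin t) F))) = dualCode (rowSpan F A)) ∧
      ∀ w : ℕ,
        {c ∈ (rowSpan F A : Set ((Fin t ⊕ Fin t) → F)) | hammingNorm c = w}.ncard =
        {c ∈ (dualCode (rowSpan F A) : Set ((Fin t ⊕ Fin t) → F)) | hammingNorm c = w}.ncard) := by
  have hΓ := orbitMatrix_mul_transpose W hW G hG R hRorb hRpart C hCorb hCpart hRlen hClen ρ hρ
  set Γ0 : Matrix (Fin t) (Fin t) ℤ := Matrix.of fun i j => ∑ z ∈ C j, W (ρ i) z with hΓ0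
  set ΓF : Matrix (Fin t) (Fin t) F := Γ0.map (Int.cast : ℤ → F) with hΓF
  -- transfer the integer identity to F
  have hProdF : ΓF * ΓFᵀ = (m : F) • (1 : Matrix (Fin t) (Fin t) F) := by
    have hmap : ΓF = Γ0.map (Int.castRingHom F) := rfl
    rw [hmap, ← Matrix.transpose_map, ← Matrix.map_mul, hΓ]
    ext i k
    rw [Matrix.map_apply]
    by_cases h : i = k <;>
      simp [Matrix.smul_apply, Matrix.one_apply, h]
  have hAAT : A * Aᵀ = ((m : F) + 1) • (1 : Matrix (Fin t) (Fin t) F) := by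
    rw [hA, Matrix.transpose_fromCols, Matrix.fromCols_mul_fromRows, hProdF,
      Matrix.transpose_one, Matrix.mul_one, add_smul, one_smul]
  have hAinj : Function.Injective A.vecMulLinear := by
    rw [← LinearMap.ker_eq_bot, LinearMap.ker_eq_bot']
    intro u hu
    have h2 : u ᵥ* A = 0 := hu
    rw [hA, Matrix.vecMul_fromCols] at h2
    funext j
    have := congrFun h2 (Sum.inr j)
    simpa [Matrix.vecMul_one] using this
  have hLCD : IsLCD (rowSpan F A) := by
    rw [IsLCD, eq_bot_iff]
    intro v hv
    rw [Submodule.mem_inf] at hv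
    obtain ⟨hv1, hv2⟩ := hv
    obtain ⟨u, rfl⟩ := (mem_rowSpan_iff A v).mp hv1
    rw [dualCode_rowSpan, LinearMap.mem_ker] at hv2
    rw [Matrix.mulVecLin_apply, Matrix.mulVec_vecMul, hAAT] at hv2
    have h0 : ((m : F) + 1) • u = 0 := by
      simpa [Matrix.smul_mulVec, Matrix.one_mulVec] using hv2
    have hu : u = 0 := by
      rcases smul_eq_zero.mp h0 with h | h
      · exact absurd h hm1
      · exact h
    simp [hu, Matrix.zero_vecMul, Submodule.mem_bot]
  have hfrA : Module.finrank F (rowSpan F A) = t := by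
    rw [finrank_rowSpan A hAinj, Fintype.card_fin]
  refine ⟨⟨hLCD, hfrA⟩, ?_⟩
  intro hm0 α hα
  have hα0 : α ≠ 0 := by
    intro h
    rw [h, zero_add] at hα
    exact hm0 hα
  set Abar : Matrix (Fin t) (Fin t ⊕ Fin t) F := Matrix.fromCols ΓF (α • 1) with hAbar
  have hAAbar : A * Abarᵀ = 0 := by
    rw [hAbar, hA, Matrix.transpose_fromCols, Matrix.fromCols_mul_fromRows, hProdF,
      Matrix.transpose_smul, Matrix.transpose_one, Matrix.mul_smul, Matrix.mul_one, ← add_smul]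
    rw [show (m : F) + α = 0 by rw [add_comm]; exact hα, zero_smul]
  have hle : rowSpan F Abar ≤ dualCode (rowSpan F A) := by
    intro v hv
    obtain ⟨u, rfl⟩ := (mem_rowSpan_iff Abar v).mp hv
    rw [dualCode_rowSpan, LinearMap.mem_ker, Matrix.mulVecLin_apply, Matrix.mulVec_vecMul,
      hAAbar, Matrix.zero_mulVec]
  have hAbarinj : Function.Injective Abar.vecMulLinear := by
    rw [← LinearMap.ker_eq_bot, LinearMap.ker_eq_bot']
    intro u hu
    have h2 : u ᵥ* Abar = 0 := hu
    rw [hAbar, Matrix.vecMul_fromCols] at h2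
    have h3 : u ᵥ* (α • (1 : Matrix (Fin t) (Fin t) F)) = α • u := by
      funext j
      have hterm : ∀ i, u i * (α • (1 : Matrix (Fin t) (Fin t) F)) i j
          = if i = j then α * u j else 0 := by
        intro i
        by_cases h : i = j <;> simp [Matrix.smul_apply, Matrix.one_apply, h, mul_comm]
      simp only [Matrix.vecMul, dotProduct, hterm, Pi.smul_apply, smul_eq_mul]
      rw [Finset.sum_ite_eq' Finset.univ j fun _ => α * u j]
      simp
    have h4 : α • u = 0 := by
      rw [← h3]
      funext j
      exact congrFun h2 (Sum.inr j)
    exact (smul_eq_zero.mp h4).resolve_left hα0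
  have hfrAbar : Module.finrank F (rowSpan F Abar) = t := by
    rw [finrank_rowSpan Abar hAbarinj, Fintype.card_fin]
  have hsurj : Function.Surjective A.mulVecLin := by
    intro y
    refine ⟨Sum.elim 0 y, ?_⟩
    rw [Matrix.mulVecLin_apply, hA, Matrix.fromCols_mulVec_sumElim]
    simp [Matrix.mulVec_zero, Matrix.one_mulVec]
  have hfrdual : Module.finrank F (dualCode (rowSpan F A)) = t := by
    rw [dualCode_rowSpan]
    have hrn := LinearMap.finrank_range_add_finrank_ker A.mulVecLin
    rw [LinearMap.range_eq_top.mpr hsurj, finrank_top] at hrn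
    have h1 : Module.finrank F (Fin t → F) = t := Module.finrank_fin_fun F
    have h2 : Module.finrank F ((Fin t ⊕ Fin t) → F) = t + t := by
      rw [Module.finrank_pi]
      simp
    rw [h1, h2] at hrn
    omega
  have hdual : rowSpan F Abar = dualCode (rowSpan F A) :=
    Submodule.eq_of_le_of_finrank_eq hle (by rw [hfrAbar, hfrdual])
  refine ⟨hdual, ?_⟩
  -- weight enumerators agree, via the coordinate-scaling bijection
  set s : (Fin t ⊕ Fin t) → F := Sum.elim (fun _ => (1 : F)) (fun _ => α) with hsdef
  have hs : ∀ x, s x ≠ 0 := by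
    rintro (x | x) <;> simp [hsdef, hα0]
  set φ : ((Fin t ⊕ Fin t) → F) →ₗ[F] ((Fin t ⊕ Fin t) → F) :=
    { toFun := fun v x => s x * v x
      map_add' := fun u v => funext fun x => by simp [mul_add]
      map_smul' := fun c v => funext fun x => by
        simp only [Pi.smul_apply, smul_eq_mul, RingHom.id_apply]
        ring } with hφdef
  have hφapp : ∀ v x, φ v x = s x * v x := fun v x => rfl
  have hφinj : Function.Injective φ := by
    intro u v huv
    funext x
    exact mul_left_cancel₀ (hs x) (congrFun huv x)
  have hφrows : ∀ i, φ (A i) = Abar i := by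
    intro i
    funext x
    cases x with
    | inl j =>
      rw [hφapp]
      simp [hsdef, hA, hAbar, Matrix.fromCols]
    | inr j =>
      rw [hφapp]
      simp [hsdef, hA, hAbar, Matrix.fromCols, Matrix.smul_apply, Matrix.one_apply]
  have hmapφ : Submodule.map φ (rowSpan F A) = rowSpan F Abar := by
    rw [rowSpan, rowSpan, Submodule.map_span, ← Set.range_comp]
    congr 1
    exact congrArg Set.range (funext hφrows)
  have hN : ∀ v, hammingNorm (φ v) = hammingNorm v := by
    intro v
    simp only [hammingNorm]
    congr 1
    ext x
    simp only [Finset.mem_filter, Finset.mem_univ, true_and, hφapp]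
    constructor
    · intro h h'
      exact h (by rw [h', mul_zero])
    · intro h h'
      exact h ((mul_eq_zero.mp h').resolve_left (hs x))
  intro w
  have himg : {c ∈ (dualCode (rowSpan F A) : Set ((Fin t ⊕ Fin t) → F)) | hammingNorm c = w}
      = φ '' {c ∈ (rowSpan F A : Set ((Fin t ⊕ Fin t) → F)) | hammingNorm c = w} := by
    rw [← hdual, ← hmapφ]
    ext c
    constructor
    · rintro ⟨hc, hw⟩
      obtain ⟨d, hd, rfl⟩ := hc
      exact ⟨d, ⟨hd, by rw [← hN d]; exact hw⟩, rfl⟩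
    · rintro ⟨d, ⟨hd, hw⟩, rfl⟩
      exact ⟨Submodule.mem_map_of_mem hd, by rw [hN d]; exact hw⟩
  rw [himg, Set.ncard_image_of_injective _ hφinj]
end
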